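/- Let f be the free Q(v)-algebra on generators θ_i (i ∈ I) modulo the quantum Serre relations associated to a graph Γ without loops, graded by N[I] with deg θ_i = i. There exists a unique Q(v)-linear map _i r̄ : f → f satisfying _i r̄(1) = 0, _i r̄(θ_j) = δ_{ij}, and _i r̄(xy) = _i r̄(x)·y + v^{(i,-|x|)}·x·_i r̄(y) for homogeneous x, y, where |x| denotes the degree of x and (,) is the symmetric bilinear form on Z[I] given by the Cartan data of Γ. -/

import Mathlib

noncomputable section
open scoped Classical TensorProduct

/-- The field `ℚ(v)` of rational functions over `ℚ`. -/
abbrev Kq : Type := RatFunc ℚ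

/-- The indeterminate `v`. -/
def vq : Kq := RatFunc.X

/-- The quantum integer `[s] = (v^s - v^{-s})/(v - v⁻¹)`. -/
def qint (s : ℤ) : Kq := (vq ^ s - vq ^ (-s)) / (vq - vq⁻¹)

/-- The quantum factorial `[s]!`. -/
def qfact (n : ℕ) : Kq := ∏ k ∈ Finset.range n, qint (k + 1)

/-- The quantum binomial coefficient. -/
def qbinom (s t : ℕ) : Kq := qfact s / (qfact t * qfact (s - t))

/-- A finite graph without loops on vertex set `I`, recorded by the number
`E i j` of edges joining `i` and `j`. -/
structure GraphData (I : Type) where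
  E : I → I → ℕ
  symm : ∀ i j, E i j = E j i
  loopless : ∀ i, E i i = 0

variable {I : Type}

/-- The Cartan pairing `(i,j) = 2δ_{ij} − #{edges between i and j}`. -/
def cart (G : GraphData I) (i j : I) : ℤ := if i = j then 2 else -(G.E i j : ℤ)

/-- The pairing `(i, μ)` of a vertex with an element `μ ∈ ℕ[I]`. -/
def pairing (G : GraphData I) (i : I) (μ : I →₀ ℕ) : ℤ :=
  μ.sum fun j n => (n : ℤ) * cart G i j

/-- The quantum Serre relation element attached to `i ≠ j`. -/
def serreElem (G : GraphData I) (i j : I) : FreeAlgebra Kq I :=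
  ∑ p ∈ Finset.range (2 + G.E i j),
    (((-1 : Kq) ^ p) * qbinom (1 + G.E i j) p) •
      (FreeAlgebra.ι Kq i ^ p * FreeAlgebra.ι Kq j *
        FreeAlgebra.ι Kq i ^ (1 + G.E i j - p))

/-- The quantum Serre relations. -/
inductive SerreRel (G : GraphData I) : FreeAlgebra Kq I → FreeAlgebra Kq I → Prop
  | serre : ∀ i j, i ≠ j → SerreRel G (serreElem G i j) 0

/-- Lusztig's algebra `f = U⁻` attached to the graph `G`: the free algebra on the
generators `θ_i` modulo the quantum Serre relations. -/
abbrev UM (G : GraphData I) : Type := RingQuot (SerreRel G)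

/-- The generator `θ_i` of `U⁻`. -/
def θ (G : GraphData I) (i : I) : UM G :=
  RingQuot.mkAlgHom Kq (SerreRel G) (FreeAlgebra.ι Kq i)

/-- The monomial `θ_{i_1} ⋯ θ_{i_m}`. -/
def word (G : GraphData I) (l : List I) : UM G := (l.map (θ G)).prod

/-- The degree in `ℕ[I]` of a monomial. -/
def degw (l : List I) : I →₀ ℕ := (l.map fun i => Finsupp.single i 1).sum

/-- The homogeneous component of `U⁻` of degree `μ ∈ ℕ[I]`. -/
def homog (G : GraphData I) (μ : I →₀ ℕ) : Submodule Kq (UM G) :=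
  Submodule.span Kq {x | ∃ l : List I, degw l = μ ∧ x = word G l}



lemma vq_ne : vq ≠ 0 := RatFunc.X_ne_zero

lemma vpow_nat_ne_one {k : ℕ} (hk : 1 ≤ k) : vq ^ k ≠ 1 := by
  have : vq ^ k = algebraMap (Polynomial ℚ) Kq (Polynomial.X ^ k) := by
    simp [vq, RatFunc.algebraMap_X]
  rw [this]
  intro h
  have h1 : (algebraMap (Polynomial ℚ) Kq) (Polynomial.X ^ k) = algebraMap (Polynomial ℚ) Kq 1 := by
    simpa using h
  have := IsFractionRing.injective (Polynomial ℚ) Kq h1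
  have := congrArg (Polynomial.eval 0) this
  simp [Polynomial.eval_pow, zero_pow (by omega : k ≠ 0)] at this

lemma zv (a b : ℕ) (e : ℤ) (h : e = (a:ℤ) - b) : vq ^ e = vq ^ a * (vq⁻¹) ^ b := by
  subst h
  rw [zpow_sub₀ vq_ne, zpow_natCast, zpow_natCast, div_eq_mul_inv, inv_pow]

lemma num_ne {s : ℤ} (hs : 1 ≤ s) : vq ^ s - vq ^ (-s) ≠ 0 := by
  obtain ⟨k, hk, rfl⟩ : ∃ k : ℕ, 1 ≤ k ∧ s = (k:ℤ) := ⟨s.toNat, by omega, by omega⟩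
  rw [zv k 0 _ (by push_cast; ring), zv 0 k _ (by push_cast; ring)]
  simp only [pow_zero, mul_one, one_mul]
  intro h
  apply vpow_nat_ne_one (k := 2*k) (by omega)
  have h2 : vq ^ k = (vq⁻¹) ^ k := sub_eq_zero.mp h
  have : vq ^ k * vq ^ k = (vq⁻¹)^k * vq ^ k := by rw [← h2]
  rw [← pow_add, inv_pow, inv_mul_cancel₀ (pow_ne_zero _ vq_ne)] at this
  rw [two_mul]; exact this

lemma hdenom : vq - vq⁻¹ ≠ 0 := by
  have := num_ne (s := 1) le_rfl
  simpa [zpow_one, zpow_neg] using this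

lemma qint_ne {s : ℤ} (hs : 1 ≤ s) : qint s ≠ 0 := div_ne_zero (num_ne hs) hdenom

lemma qint_zero : qint 0 = 0 := by simp [qint]

lemma qfact_succ (n : ℕ) : qfact (n+1) = qfact n * qint (n+1) := Finset.prod_range_succ _ _

lemma qfact_zero : qfact 0 = 1 := rfl

lemma qfact_ne (n : ℕ) : qfact n ≠ 0 := by
  induction n with
  | zero => simp [qfact_zero]
  | succ n ih => rw [qfact_succ]; exact mul_ne_zero ih (qint_ne (by omega))

lemma qbinom_zero (n : ℕ) : qbinom n 0 = 1 := by
  simp [qbinom, qfact_zero, div_self (qfact_ne n)]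

lemma qbinom_self (n : ℕ) : qbinom n n = 1 := by
  simp [qbinom, qfact_zero, div_self (qfact_ne n)]

lemma zvp (k : ℕ) : vq ^ ((k:ℕ):ℤ) = vq ^ k := zpow_natCast _ _
lemma zvn (k : ℕ) : vq ^ (-((k:ℕ):ℤ)) = (vq⁻¹) ^ k := by
  rw [zpow_neg, zpow_natCast, inv_pow]

lemma qint_split (a b : ℕ) :
    qint ((a:ℤ)+(b:ℤ)+2) = vq^((a:ℤ)+1) * qint ((b:ℤ)+1) + vq^(-(b:ℤ)-1) * qint ((a:ℤ)+1) := by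
  rw [qint, qint, qint,
    show (a:ℤ)+(b:ℤ)+2 = ((a+b+2 : ℕ):ℤ) by push_cast; ring,
    show (a:ℤ)+1 = ((a+1 : ℕ):ℤ) by push_cast; ring,
    show (b:ℤ)+1 = ((b+1 : ℕ):ℤ) by push_cast; ring,
    show -(b:ℤ)-1 = -((b+1 : ℕ):ℤ) by push_cast; ring]
  simp only [neg_neg, zvp, zvn]
  rw [← mul_div_assoc, ← mul_div_assoc, ← add_div, div_eq_div_iff hdenom hdenom]
  field_simp
  ring_nf

lemma vmul (x y z : ℤ) (h : x + y = z) : vq^x * vq^y = vq^z := by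
  rw [← zpow_add₀ vq_ne, h]

lemma qint_mul_denom (s : ℤ) : qint s * (vq - vq⁻¹) = vq^s - vq^(-s) :=
  div_mul_cancel₀ _ hdenom

lemma qbinom_pascal (a b : ℕ) :
    qbinom (a+b+2) (a+1)
      = vq^(a+1) * qbinom (a+b+1) (a+1) + (vq⁻¹)^(b+1) * qbinom (a+b+1) a := by
  have h1 : (a+b+2) - (a+1) = b+1 := by omega
  have h2 : (a+b+1) - (a+1) = b := by omega
  have h3 : (a+b+1) - a = b+1 := by omega
  rw [qbinom, qbinom, qbinom, h1, h2, h3]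
  rw [show a+b+2 = (a+b+1)+1 from rfl, qfact_succ (a+b+1),
      show ((a+b+1:ℕ):ℤ)+1 = (a:ℤ)+(b:ℤ)+2 by push_cast; ring, qint_split a b,
      qfact_succ a, qfact_succ b,
      zv (a+1) 0 ((a:ℤ)+1) (by push_cast; ring), zv 0 (b+1) (-(b:ℤ)-1) (by push_cast; ring)]
  simp only [pow_zero, mul_one, one_mul]
  have n1 := qfact_ne a; have n2 := qfact_ne b; have n3 := qfact_ne (a+b+1)
  have n4 : qint ((a:ℤ)+1) ≠ 0 := qint_ne (by omega)
  have n5 : qint ((b:ℤ)+1) ≠ 0 := qint_ne (by omega)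
  have d1 : qfact a * qint ((a:ℤ)+1) * qfact b ≠ 0 :=
    mul_ne_zero (mul_ne_zero n1 n4) n2
  have d2 : qfact a * (qfact b * qint ((b:ℤ)+1)) ≠ 0 :=
    mul_ne_zero n1 (mul_ne_zero n2 n5)
  have d3 : qfact a * qint ((a:ℤ)+1) * (qfact b * qint ((b:ℤ)+1)) ≠ 0 :=
    mul_ne_zero (mul_ne_zero n1 n4) (mul_ne_zero n2 n5)
  rw [← mul_div_assoc, ← mul_div_assoc, div_add_div _ _ d1 d2,
      div_eq_div_iff d3 (mul_ne_zero d1 d2)]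
  ring

lemma qbinom_B (q m : ℕ) :
    qbinom (q+m+1) (q+1) * qint ((q:ℤ)+1) = qbinom (q+m+1) q * qint ((m:ℤ)+1) := by
  have h1 : (q+m+1)-(q+1) = m := by omega
  have h2 : (q+m+1)-q = m+1 := by omega
  rw [qbinom, qbinom, h1, h2, qfact_succ q, qfact_succ m]
  have n1 := qfact_ne q; have n2 := qfact_ne m; have n3 := qfact_ne (q+m+1)
  have n4 : qint ((q:ℤ)+1) ≠ 0 := qint_ne (by omega)
  have n5 : qint ((m:ℤ)+1) ≠ 0 := qint_ne (by omega)
  field_simp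

def qs (p : ℕ) : Kq := ∑ k ∈ Finset.range p, vq ^ (-2*(k:ℤ))

lemma qs_zero : qs 0 = 0 := by simp [qs]

lemma qs_eq (p : ℕ) : qs p = vq^(1-(p:ℤ)) * qint p := by
  induction p with
  | zero => simp [qs, qint_zero]
  | succ p ih =>
    apply mul_right_cancel₀ hdenom
    rw [show qs (p+1) = qs p + vq^(-2*(p:ℤ)) from Finset.sum_range_succ _ p]
    rw [add_mul, ih, mul_assoc, qint_mul_denom, mul_assoc, qint_mul_denom]
    rw [zv 1 p (1-(p:ℤ)) (by push_cast; ring), zvp p, zvn p,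
        zv 0 (2*p) (-2*(p:ℤ)) (by push_cast; ring),
        zv 0 p (1-((p+1:ℕ):ℤ)) (by push_cast; ring),
        zv (p+1) 0 (((p+1:ℕ)):ℤ) (by push_cast; ring),
        zvn (p+1)]
    simp only [inv_pow]
    field_simp
    ring

lemma gauss (E : ℕ) :
    ∑ p ∈ Finset.range (E+2), ((-1:Kq)^p * qbinom (E+1) p * vq^(p*E)) = 0 := by
  have key : ∀ m, m ≤ E → ∑ p ∈ Finset.range (m+1), ((-1:Kq)^p * qbinom (E+1) p * vq^(p*E))
      = (-1)^m * vq^(m*(E+1)) * qbinom E m := by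
    intro m
    induction m with
    | zero => intro _; simp [qbinom_zero]
    | succ m ih =>
      intro hm
      rw [Finset.sum_range_succ, ih (by omega)]
      obtain ⟨b, rfl⟩ : ∃ b, E = m + b + 1 := ⟨E - m - 1, by omega⟩
      rw [show m+b+1+1 = m+b+2 from rfl, qbinom_pascal m b]
      have e1 : vq⁻¹^(b+1) * vq^((m+1)*(m+b+1)) = vq^(m*(m+b+2)) := by
        rw [inv_pow, inv_mul_eq_iff_eq_mul₀ (pow_ne_zero _ vq_ne), ← pow_add]
        congr 1; ring
      have e2 : vq^(m+1) * vq^((m+1)*(m+b+1)) = vq^((m+1)*(m+b+2)) := by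
        rw [← pow_add]; congr 1; ring
      linear_combination ((-1:Kq)^(m+1) * qbinom (m+b+1) m) * e1
        + ((-1:Kq)^(m+1) * qbinom (m+b+1) (m+1)) * e2
  rw [show E+2 = (E+1)+1 from rfl, Finset.sum_range_succ, key E le_rfl, qbinom_self, qbinom_self]
  ring

lemma Bp (q m : ℕ) :
    qbinom (q+m+1) (q+1) * qs (q+1)
      = qbinom (q+m+1) q * (vq^((m:ℤ)-(q:ℤ)) * qs (m+1)) := by
  rw [qs_eq, qs_eq]
  have e1 : vq^(1-((q+1:ℕ):ℤ)) = vq^(-(q:ℤ)) := by congr 1; push_cast; ring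
  have e2 : vq^((m:ℤ)-(q:ℤ)) * vq^(1-((m+1:ℕ):ℤ)) = vq^(-(q:ℤ)) :=
    vmul _ _ _ (by push_cast; ring)
  have hB := qbinom_B q m
  have c1 : qint (((q+1:ℕ)):ℤ) = qint ((q:ℤ)+1) := by norm_cast
  have c2 : qint (((m+1:ℕ)):ℤ) = qint ((m:ℤ)+1) := by norm_cast
  rw [e1, c1, c2, show vq^((m:ℤ)-(q:ℤ)) * (vq^(1-((m+1:ℕ):ℤ)) * qint ((m:ℤ)+1))
      = (vq^((m:ℤ)-(q:ℤ)) * vq^(1-((m+1:ℕ):ℤ))) * qint ((m:ℤ)+1) by ring, e2]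
  linear_combination vq^(-(q:ℤ)) * hB

lemma qs_succ (p : ℕ) : qs (p+1) = qs p + vq ^ (-2*(p:ℤ)) := Finset.sum_range_succ _ p
section Core
variable (G : GraphData I) (i : I)

def pim : FreeAlgebra Kq I →ₐ[Kq] UM G := RingQuot.mkAlgHom Kq (SerreRel G)

def sig' : FreeAlgebra Kq I →ₐ[Kq] UM G :=
  FreeAlgebra.lift Kq (fun j => vq ^ (-(cart G i j)) • θ G j)

def Mir : FreeAlgebra Kq I →ₐ[Kq] Matrix (Fin 2) (Fin 2) (UM G) :=
  FreeAlgebra.lift Kq (fun j =>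
    Matrix.of ![![θ G j, 0], ![(if i = j then (1:UM G) else 0), vq ^ (-(cart G i j)) • θ G j]])

lemma Mir_ι (j : I) : Mir G i (FreeAlgebra.ι Kq j)
    = Matrix.of ![![θ G j, 0], ![(if i = j then (1:UM G) else 0), vq ^ (-(cart G i j)) • θ G j]] :=
  FreeAlgebra.lift_ι_apply _ _

lemma sig'_ι (j : I) : sig' G i (FreeAlgebra.ι Kq j) = vq ^ (-(cart G i j)) • θ G j :=
  FreeAlgebra.lift_ι_apply _ _

lemma pim_ι (j : I) : pim G (FreeAlgebra.ι Kq j) = θ G j := rfl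

lemma Mir_entries (a : FreeAlgebra Kq I) :
    (Mir G i a) 0 0 = pim G a ∧ (Mir G i a) 0 1 = 0 ∧ (Mir G i a) 1 1 = sig' G i a := by
  induction a using FreeAlgebra.induction with
  | grade0 r =>
    simp [Matrix.algebraMap_matrix_apply]
  | grade1 x =>
    simp [Mir_ι, sig'_ι, pim_ι]
  | mul a b ha hb =>
    obtain ⟨ha1, ha2, ha3⟩ := ha; obtain ⟨hb1, hb2, hb3⟩ := hb
    simp [map_mul, Matrix.mul_apply, Fin.sum_univ_two, ha1, ha2, ha3, hb1, hb2, hb3]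
  | add a b ha hb =>
    obtain ⟨ha1, ha2, ha3⟩ := ha; obtain ⟨hb1, hb2, hb3⟩ := hb
    simp [map_add, Matrix.add_apply, ha1, ha2, ha3, hb1, hb2, hb3]

def Fr (a : FreeAlgebra Kq I) : UM G := Mir G i a 1 0

lemma Fr_mul (a b : FreeAlgebra Kq I) :
    Fr G i (a*b) = Fr G i a * pim G b + sig' G i a * Fr G i b := by
  unfold Fr
  rw [map_mul, Matrix.mul_apply, Fin.sum_univ_two,
    (Mir_entries G i b).1, (Mir_entries G i a).2.2]

lemma Fr_one : Fr G i 1 = 0 := by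
  unfold Fr; rw [map_one]; exact Matrix.one_apply_ne (by decide)

lemma Fr_ι (j : I) : Fr G i (FreeAlgebra.ι Kq j) = if i = j then 1 else 0 := by
  unfold Fr; rw [Mir_ι]; rfl

lemma sig'_ι_pow (j : I) (p : ℕ) :
    sig' G i (FreeAlgebra.ι Kq j ^ p) = vq ^ (-(p:ℤ) * cart G i j) • θ G j ^ p := by
  rw [map_pow, sig'_ι, smul_pow, ← zpow_natCast (vq ^ (-(cart G i j))) p, ← zpow_mul]
  congr 1; ring

lemma pim_ι_pow (j : I) (p : ℕ) : pim G (FreeAlgebra.ι Kq j ^ p) = θ G j ^ p := by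
  rw [map_pow, pim_ι]

lemma Fr_pow_ne (j : I) (h : i ≠ j) (p : ℕ) : Fr G i (FreeAlgebra.ι Kq j ^ p) = 0 := by
  induction p with
  | zero => simpa using Fr_one G i
  | succ p ih =>
    rw [pow_succ, Fr_mul, ih, Fr_ι, if_neg h, zero_mul, mul_zero, add_zero]

lemma cart_self : cart G i i = 2 := if_pos rfl

lemma Fr_pow_i (p : ℕ) : Fr G i (FreeAlgebra.ι Kq i ^ p) = qs p • θ G i ^ (p-1) := by
  induction p with
  | zero => simpa [qs_zero] using Fr_one G i
  | succ p ih =>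
    rw [pow_succ, Fr_mul, ih, Fr_ι, if_pos rfl, sig'_ι_pow, cart_self, mul_one, qs_succ,
      add_smul, smul_mul_assoc]
    rcases Nat.eq_zero_or_pos p with hp | hp
    · subst hp; simp [qs_zero]
    · obtain ⟨q, rfl⟩ : ∃ q, p = q + 1 := ⟨p-1, by omega⟩
      rw [pim_ι]
      simp only [Nat.add_sub_cancel]
      rw [← pow_succ, show (-(((q+1):ℕ):ℤ) * 2) = -2*(((q+1):ℕ):ℤ) by ring]

lemma pim_serre (i' j' : I) (h : i' ≠ j') : pim G (serreElem G i' j') = 0 := by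
  have := RingQuot.mkAlgHom_rel Kq (SerreRel.serre (G := G) i' j' h)
  simpa [pim] using this

lemma sig'_serre (i' j' : I) (h : i' ≠ j') : sig' G i (serreElem G i' j') = 0 := by
  have key : sig' G i (serreElem G i' j')
      = vq ^ (-((1 + G.E i' j' : ℕ):ℤ) * cart G i i' - cart G i j') • pim G (serreElem G i' j') := by
    rw [serreElem, map_sum, map_sum, Finset.smul_sum]
    apply Finset.sum_congr rfl
    intro p hp
    have hpn : p ≤ 1 + G.E i' j' := by
      simp only [Finset.mem_range] at hp; omega
    rw [map_smul, map_smul, map_mul, map_mul, map_mul, map_mul,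
        sig'_ι_pow, sig'_ι, sig'_ι_pow, pim_ι_pow, pim_ι, pim_ι_pow,
        smul_mul_smul_comm, smul_mul_smul_comm,
        vmul _ _ (-(p:ℤ) * cart G i i' - cart G i j') (by ring),
        vmul _ _ (-((1 + G.E i' j' : ℕ):ℤ) * cart G i i' - cart G i j')
          (by push_cast [hpn]; ring),
        smul_smul, smul_smul, mul_comm]
  rw [key, pim_serre G i' j' h, smul_zero]


lemma Fr_term_A (j' : I) (h : i ≠ j') (n : ℕ) (hn : 1 + G.E i j' = n) (p : ℕ) (hp : p ≤ n) :
    Fr G i (FreeAlgebra.ι Kq i ^ p * FreeAlgebra.ι Kq j' * FreeAlgebra.ι Kq i ^ (n-p))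
      = (qs p) • (θ G i ^ (p-1) * θ G j' * θ G i ^ (n-1-(p-1)))
        + (vq^(((n:ℤ)-1)-2*(p:ℤ)) * qs (n-p)) • (θ G i ^ p * θ G j' * θ G i ^ (n-1-p)) := by
  have hc : cart G i j' = 1 - (n:ℤ) := by
    rw [cart, if_neg h]; omega
  rw [Fr_mul, Fr_mul, Fr_pow_i, Fr_ι, if_neg h, pim_ι, pim_ι_pow, map_mul, sig'_ι_pow,
    cart_self, sig'_ι, hc, Fr_pow_i]
  simp only [mul_zero, add_zero, smul_mul_assoc, mul_smul_comm, smul_smul]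
  rw [vmul (-(1-(n:ℤ))) (-(p:ℤ)*2) ((n:ℤ)-1-2*(p:ℤ)) (by ring), mul_comm (qs (n-p)) _,
    show n-p-1 = n-1-p by omega]
  rcases Nat.eq_zero_or_pos p with hp0 | hp0
  · subst hp0; simp [qs_zero]
  · obtain ⟨q, rfl⟩ : ∃ q, p = q+1 := ⟨p-1, by omega⟩
    rw [show n - (q+1) = n - 1 - (q+1-1) by omega]


lemma Fr_serre (i' j' : I) (hne : i' ≠ j') : Fr G i (serreElem G i' j') = 0 := by
  have expand : Fr G i (serreElem G i' j')
      = ∑ p ∈ Finset.range (2 + G.E i' j'),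
          (((-1:Kq)^p * qbinom (1 + G.E i' j') p)
            • Fr G i (FreeAlgebra.ι Kq i' ^ p * FreeAlgebra.ι Kq j'
                * FreeAlgebra.ι Kq i' ^ (1 + G.E i' j' - p))) := by
    unfold Fr
    rw [serreElem, map_sum, Matrix.sum_apply]
    exact Finset.sum_congr rfl fun p _ => by rw [map_smul, Matrix.smul_apply]
  by_cases hii : i = i'
  · -- case A : i = i'
    subst hii
    have hij : i ≠ j' := hne
    rw [expand]
    set n := 1 + G.E i j' with hn
    rw [show 2 + G.E i j' = n + 1 by omega]
    have step : ∀ p ∈ Finset.range (n+1),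
        (((-1:Kq)^p * qbinom n p)
          • Fr G i (FreeAlgebra.ι Kq i ^ p * FreeAlgebra.ι Kq j' * FreeAlgebra.ι Kq i ^ (n - p)))
          = (((-1:Kq)^p * qbinom n p) * qs p) • (θ G i ^ (p-1) * θ G j' * θ G i ^ (n-1-(p-1)))
            + (((-1:Kq)^p * qbinom n p) * (vq^((n:ℤ)-1-2*(p:ℤ)) * qs (n-p)))
                • (θ G i ^ p * θ G j' * θ G i ^ (n-1-p)) := by
      intro p hp
      rw [Fr_term_A G i j' hij n hn.symm p (Nat.lt_succ_iff.mp (Finset.mem_range.mp hp)), smul_add, smul_smul, smul_smul]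
    rw [Finset.sum_congr rfl step, Finset.sum_add_distrib,
        Finset.sum_range_succ' _ n, Finset.sum_range_succ _ n]
    simp only [qs_zero, mul_zero, zero_smul, add_zero, Nat.sub_self]
    rw [← Finset.sum_add_distrib]
    apply Finset.sum_eq_zero
    intro q hq
    have hqn : q < n := Finset.mem_range.mp hq
    simp only [Nat.add_sub_cancel]
    rw [← add_smul]
    obtain ⟨m, hm⟩ : ∃ m, q + m + 1 = n := ⟨n-q-1, by omega⟩
    have hB := Bp q m
    rw [hm, show ((m:ℤ)-(q:ℤ)) = (n:ℤ)-1-2*(q:ℤ) by omega, show m+1 = n-q by omega] at hB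
    have hco : ((-1:Kq)^(q+1) * qbinom n (q+1) * qs (q+1))
        + ((-1:Kq)^q * qbinom n q * (vq^((n:ℤ)-1-2*(q:ℤ)) * qs (n-q))) = 0 := by
      linear_combination ((-1:Kq)^(q+1)) * hB
    rw [hco, zero_smul]
  · by_cases hij : i = j'
    · -- case B : i = j'
      subst hij
      rw [expand,
        show 2 + G.E i' i = G.E i' i + 2 by omega,
        show 1 + G.E i' i = G.E i' i + 1 by omega]
      have hc : cart G i i' = -((G.E i' i : ℕ):ℤ) := by
        rw [cart, if_neg hii, G.symm]
      have step : ∀ p ∈ Finset.range (G.E i' i + 2),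
          (((-1:Kq)^p * qbinom (G.E i' i + 1) p)
            • Fr G i (FreeAlgebra.ι Kq i' ^ p * FreeAlgebra.ι Kq i
                * FreeAlgebra.ι Kq i' ^ (G.E i' i + 1 - p)))
            = ((-1:Kq)^p * qbinom (G.E i' i + 1) p * vq^(p * G.E i' i))
                • θ G i' ^ (G.E i' i + 1) := by
        intro p hp
        have hpn : p ≤ G.E i' i + 1 := by
          have := Finset.mem_range.mp hp; omega
        rw [Fr_mul, Fr_mul, Fr_pow_ne G i i' hii, Fr_ι, if_pos rfl,
          Fr_pow_ne G i i' hii, pim_ι_pow, sig'_ι_pow, hc]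
        simp only [zero_mul, zero_add, mul_one, mul_zero, add_zero, smul_mul_assoc]
        rw [← pow_add, show p + (G.E i' i + 1 - p) = G.E i' i + 1 by omega,
          show (-(p:ℤ) * -((G.E i' i : ℕ):ℤ)) = ((p * G.E i' i : ℕ):ℤ) by push_cast; ring,
          zpow_natCast, smul_smul]
      rw [Finset.sum_congr rfl step, ← Finset.sum_smul, gauss (G.E i' i), zero_smul]
    · -- case C
      rw [expand]
      apply Finset.sum_eq_zero
      intro p _
      rw [Fr_mul, Fr_mul, Fr_pow_ne G i i' hii, Fr_ι, if_neg hij, Fr_pow_ne G i i' hii]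
      simp


lemma Mir_serre (i' j' : I) (h : i' ≠ j') : Mir G i (serreElem G i' j') = 0 := by
  ext a b
  fin_cases a <;> fin_cases b
  · exact (Mir_entries G i _).1.trans (pim_serre G i' j' h)
  · exact (Mir_entries G i _).2.1
  · exact Fr_serre G i i' j' h
  · exact (Mir_entries G i _).2.2.trans (sig'_serre G i i' j' h)

def Psi : UM G →ₐ[Kq] Matrix (Fin 2) (Fin 2) (UM G) :=
  RingQuot.liftAlgHom Kq ⟨Mir G i, by
    intro x y hxy
    cases hxy with
    | serre i' j' h => rw [Mir_serre G i i' j' h, map_zero]⟩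

def sbar : UM G →ₐ[Kq] UM G :=
  RingQuot.liftAlgHom Kq ⟨sig' G i, by
    intro x y hxy
    cases hxy with
    | serre i' j' h => rw [sig'_serre G i i' j' h, map_zero]⟩

lemma Psi_mk (a : FreeAlgebra Kq I) : Psi G i (pim G a) = Mir G i a :=
  RingQuot.liftAlgHom_mkAlgHom_apply _ _ _ _

lemma sbar_mk (a : FreeAlgebra Kq I) : sbar G i (pim G a) = sig' G i a :=
  RingQuot.liftAlgHom_mkAlgHom_apply _ _ _ _

lemma Psi_00 (x : UM G) : Psi G i x 0 0 = x := by
  obtain ⟨a, rfl⟩ := RingQuot.mkAlgHom_surjective Kq (SerreRel G) x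
  rw [show RingQuot.mkAlgHom Kq (SerreRel G) a = pim G a from rfl, Psi_mk,
    (Mir_entries G i a).1]

lemma Psi_11 (x : UM G) : Psi G i x 1 1 = sbar G i x := by
  obtain ⟨a, rfl⟩ := RingQuot.mkAlgHom_surjective Kq (SerreRel G) x
  rw [show RingQuot.mkAlgHom Kq (SerreRel G) a = pim G a from rfl, Psi_mk, sbar_mk,
    (Mir_entries G i a).2.2]

def rmap : UM G →ₗ[Kq] UM G where
  toFun x := Psi G i x 1 0
  map_add' x y := by
    show Psi G i (x+y) 1 0 = Psi G i x 1 0 + Psi G i y 1 0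
    rw [map_add, Matrix.add_apply]
  map_smul' c x := by
    show Psi G i (c • x) 1 0 = c • Psi G i x 1 0
    rw [map_smul, Matrix.smul_apply]

lemma rmap_one : rmap G i 1 = 0 := by
  show Psi G i 1 1 0 = 0
  rw [map_one]
  exact Matrix.one_apply_ne (by decide)

lemma rmap_theta (j : I) : rmap G i (θ G j) = if i = j then 1 else 0 := by
  show Psi G i (θ G j) 1 0 = _
  rw [show θ G j = pim G (FreeAlgebra.ι Kq j) from rfl, Psi_mk, Mir_ι]
  rfl

lemma rmap_mul (x y : UM G) :
    rmap G i (x * y) = rmap G i x * y + sbar G i x * rmap G i y := by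
  show Psi G i (x*y) 1 0 = Psi G i x 1 0 * y + sbar G i x * Psi G i y 1 0
  rw [map_mul, Matrix.mul_apply, Fin.sum_univ_two, Psi_00, Psi_11]

-- word/degree lemmas
lemma word_nil : word G [] = 1 := rfl

lemma word_cons (j : I) (l : List I) : word G (j :: l) = θ G j * word G l := by
  simp [word]

lemma word_append (l m : List I) : word G (l ++ m) = word G l * word G m := by
  simp [word]

lemma degw_nil : degw ([] : List I) = 0 := rfl

lemma degw_cons (j : I) (l : List I) : degw (j :: l) = Finsupp.single j 1 + degw l := by
  simp [degw]

lemma pairing_zero : pairing G i 0 = 0 := by simp [pairing]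

lemma pairing_add (μ ν : I →₀ ℕ) :
    pairing G i (μ + ν) = pairing G i μ + pairing G i ν := by
  unfold pairing
  apply Finsupp.sum_add_index' <;> intros <;> push_cast <;> ring

lemma pairing_single (j : I) : pairing G i (Finsupp.single j 1) = cart G i j := by
  unfold pairing
  rw [Finsupp.sum_single_index] <;> simp

lemma sbar_theta (j : I) : sbar G i (θ G j) = vq ^ (-(cart G i j)) • θ G j := by
  rw [show θ G j = pim G (FreeAlgebra.ι Kq j) from rfl, sbar_mk, sig'_ι]
  rfl

lemma sbar_word (l : List I) :
    sbar G i (word G l) = vq ^ (-(pairing G i (degw l))) • word G l := by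
  induction l with
  | nil => rw [word_nil, map_one, degw_nil, pairing_zero]; simp
  | cons j l ih =>
    rw [word_cons, map_mul, sbar_theta, ih, degw_cons, pairing_add, pairing_single,
      smul_mul_smul_comm, vmul _ _ (-(cart G i j + pairing G i (degw l))) (by ring)]

lemma sbar_homog (μ : I →₀ ℕ) (x : UM G) (hx : x ∈ homog G μ) :
    sbar G i x = vq ^ (-(pairing G i μ)) • x := by
  induction hx using Submodule.span_induction with
  | mem x hx =>
    obtain ⟨l, hl, rfl⟩ := hx
    rw [sbar_word, hl]
  | zero => simp
  | add x y hx hy ihx ihy => rw [map_add, ihx, ihy, smul_add]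
  | smul c x hx ihx => rw [map_smul, ihx, smul_comm]

lemma word_mem_homog (l : List I) : word G l ∈ homog G (degw l) :=
  Submodule.subset_span ⟨l, rfl, rfl⟩

lemma theta_mem_homog (j : I) : θ G j ∈ homog G (Finsupp.single j 1) := by
  have h1 : degw [j] = Finsupp.single j 1 := by simp [degw]
  have h2 : word G [j] = θ G j := by simp [word]
  rw [← h1, ← h2]
  exact word_mem_homog G [j]

lemma words_span : Submodule.span Kq (Set.range (word G)) = ⊤ := by
  rw [eq_top_iff]
  rintro x -
  obtain ⟨a, rfl⟩ := RingQuot.mkAlgHom_surjective Kq (SerreRel G) x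
  induction a using FreeAlgebra.induction with
  | grade0 r =>
    rw [show (RingQuot.mkAlgHom Kq (SerreRel G)) (algebraMap Kq _ r) = algebraMap Kq _ r from
      AlgHom.commutes _ r, Algebra.algebraMap_eq_smul_one]
    exact Submodule.smul_mem _ _ (Submodule.subset_span ⟨[], rfl⟩)
  | grade1 x =>
    refine Submodule.subset_span ⟨[x], ?_⟩
    simp [word]
    rfl
  | mul a b ha hb =>
    rw [map_mul]
    have := Submodule.mul_mem_mul ha hb
    rw [Submodule.span_mul_span] at this
    refine Submodule.span_mono ?_ this
    rintro z ⟨u, ⟨l, rfl⟩, v, ⟨m, rfl⟩, rfl⟩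
    exact ⟨l ++ m, word_append G l m⟩
  | add a b ha hb =>
    rw [map_add]
    exact Submodule.add_mem _ ha hb

/-- There exists a unique `ℚ(v)`-linear map `_i r̄ : f → f` with `_i r̄(1) = 0`,
`_i r̄(θ_j) = δ_{ij}`, and
`_i r̄(xy) = _i r̄(x)·y + v^{(i,-|x|)}·x·_i r̄(y)` for homogeneous `x, y`. -/
theorem existsUnique_ibar_r (G : GraphData I) (i : I) :
    ∃! r : UM G →ₗ[Kq] UM G,
      r 1 = 0 ∧
      (∀ j : I, r (θ G j) = if i = j then 1 else 0) ∧
      (∀ (μ ν : I →₀ ℕ) (x y : UM G), x ∈ homog G μ → y ∈ homog G ν →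
        r (x * y) = r x * y + vq ^ (-(pairing G i μ)) • (x * r y)) := by
  refine ⟨rmap G i, ⟨rmap_one G i, rmap_theta G i, ?_⟩, ?_⟩
  · intro μ ν x y hx hy
    rw [rmap_mul, sbar_homog G i μ x hx, smul_mul_assoc]
  · rintro r ⟨h1, h2, h3⟩
    apply LinearMap.ext_on (words_span G)
    rintro x ⟨l, rfl⟩
    induction l with
    | nil =>
      rw [word_nil, h1, rmap_one]
    | cons j l ih =>
      rw [word_cons,
        h3 (Finsupp.single j 1) (degw l) _ _ (theta_mem_homog G j) (word_mem_homog G l),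
        rmap_mul, sbar_homog G i _ _ (theta_mem_homog G j), pairing_single,
        h2, rmap_theta, ih, smul_mul_assoc]

end Core

end
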